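/- Let S, p : [0,T] → ℝ be Lipschitz with S'(t)(S(t) - p(t)) ≤ 0 a.e., |S - p| ≤ M on [0,T] and ∫_0^T |p'| ≤ M'. Then ∫_0^T |S'(τ)(S(τ) - p(τ))| dτ ≤ (1/2)(S(0)-p(0))^2 - (1/2)(S(T)-p(T))^2 + M M', so ‖S'(S-p)‖_{L^1(0,T)} is bounded in terms of M, M' and the initial value. -/

import Mathlib

open MeasureTheory Filter

lemma lip_deriv_bound {K : NNReal} {g : ℝ → ℝ} (hg : LipschitzWith K g) (x : ℝ) :
    |deriv g x| ≤ K := by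
  have := norm_fderiv_le_of_lipschitz ℝ hg (x₀ := x)
  rw [← Real.norm_eq_abs, ← fderiv_apply_one_eq_deriv]
  calc ‖fderiv ℝ g x 1‖ ≤ ‖fderiv ℝ g x‖ * ‖(1:ℝ)‖ := (fderiv ℝ g x).le_opNorm 1
    _ ≤ K := by simpa using this

lemma lip_slope_bound {K : NNReal} {g : ℝ → ℝ} (hg : LipschitzWith K g) (x h : ℝ) (hh : h ≠ 0) :
    |(g (x + h) - g x) / h| ≤ K := by
  rw [abs_div, div_le_iff₀ (abs_pos.2 hh)]
  have := hg.dist_le_mul (x + h) x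
  simp only [Real.dist_eq, add_sub_cancel_left] at this
  linarith

lemma lip_integral_deriv {K : NNReal} {g : ℝ → ℝ} (hg : LipschitzWith K g) (a b : ℝ) :
    ∫ x in a..b, deriv g x = g b - g a := by
  set hn : ℕ → ℝ := fun n => ((n:ℝ)+1)⁻¹ with hhn
  have hnpos : ∀ n, 0 < hn n := fun n => by positivity
  have hnne : ∀ n, hn n ≠ 0 := fun n => (hnpos n).ne'
  have hn0 : Tendsto hn atTop (nhds 0) := by
    simpa [hhn, one_div] using (tendsto_one_div_add_atTop_nhds_zero_nat :
      Tendsto (fun n : ℕ => 1 / ((n : ℝ) + 1)) atTop (nhds 0))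
  have gcont : Continuous g := hg.continuous
  have gint : ∀ c d : ℝ, IntervalIntegrable g volume c d := fun c d =>
    gcont.intervalIntegrable c d
  -- the difference quotient integrals
  set F : ℕ → ℝ := fun n => ∫ x in a..b, (g (x + hn n) - g x) / hn n with hF
  -- F n equals a telescoped expression
  have hFeq : ∀ n, F n = ((∫ x in b..(b + hn n), g x) - ∫ x in a..(a + hn n), g x) / hn n := by
    intro n
    have : F n = ((∫ x in a..b, g (x + hn n)) - ∫ x in a..b, g x) / hn n := by
      rw [hF]
      simp only [div_eq_mul_inv, ← sub_mul]
      rw [intervalIntegral.integral_mul_const]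
      congr 1
      exact intervalIntegral.integral_sub
        ((gcont.comp (continuous_id.add continuous_const)).intervalIntegrable a b) (gint a b)
    rw [this, intervalIntegral.integral_comp_add_right]
    congr 1
    have h1 := intervalIntegral.integral_add_adjacent_intervals (gint (a + hn n) b)
      (gint b (b + hn n))
    have h2 := intervalIntegral.integral_add_adjacent_intervals (gint (a + hn n) a)
      (gint a b)
    have h3 := intervalIntegral.integral_add_adjacent_intervals (gint a (a + hn n))
      (gint (a + hn n) a)
    rw [intervalIntegral.integral_same] at h3
    linarith
  -- limit of (1/h) ∫_c^{c+h} g = g c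
  have hlim : ∀ c : ℝ, Tendsto (fun n => (∫ x in c..(c + hn n), g x) / hn n) atTop (nhds (g c)) := by
    intro c
    have hd : HasDerivAt (fun y => ∫ x in c..y, g x) (g c) c :=
      intervalIntegral.integral_hasDerivAt_right (gint c c)
        (gcont.stronglyMeasurableAtFilter _ _) gcont.continuousAt
    have := hd.tendsto_slope_zero_right.comp
      (tendsto_nhdsWithin_iff.2 ⟨hn0, Eventually.of_forall fun n => Set.mem_Ioi.2 (hnpos n)⟩)
    simp only [Function.comp_def] at this
    refine this.congr fun n => ?_
    rw [intervalIntegral.integral_same, sub_zero, smul_eq_mul, div_eq_inv_mul]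
  -- F n tends to g b - g a
  have hFlim : Tendsto F atTop (nhds (g b - g a)) := by
    refine ((hlim b).sub (hlim a)).congr fun n => ?_
    rw [hFeq n, sub_div]
  -- F n tends to ∫ deriv g by dominated convergence
  have hmeas : ∀ n : ℕ, AEStronglyMeasurable (fun x => (g (x + hn n) - g x) / hn n)
      (volume.restrict (Set.uIoc a b)) :=
    fun n => (((gcont.comp (continuous_id.add continuous_const)).sub gcont).div_const
      _).aestronglyMeasurable.restrict
  have hbound : ∀ n : ℕ, ∀ᵐ x : ℝ, x ∈ Set.uIoc a b → ‖(g (x + hn n) - g x) / hn n‖ ≤ (K:ℝ) :=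
    fun n => Eventually.of_forall fun x _ => by
      rw [Real.norm_eq_abs]; exact lip_slope_bound hg x (hn n) (hnne n)
  have hdiff := hg.ae_differentiableAt_real
  have hptlim : ∀ᵐ x : ℝ, x ∈ Set.uIoc a b →
      Tendsto (fun n => (g (x + hn n) - g x) / hn n) atTop (nhds (deriv g x)) := by
    refine hdiff.mono fun x hx _ => ?_
    have hd := hx.hasDerivAt
    have := hd.tendsto_slope_zero_right.comp
      (tendsto_nhdsWithin_iff.2 ⟨hn0, Eventually.of_forall fun n => Set.mem_Ioi.2 (hnpos n)⟩)
    simp only [Function.comp_def] at this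
    refine this.congr fun n => ?_
    rw [smul_eq_mul, div_eq_inv_mul]
  have hdct := intervalIntegral.tendsto_integral_filter_of_dominated_convergence
    (fun _ => (K:ℝ)) (Eventually.of_forall hmeas) (Eventually.of_forall hbound)
    (intervalIntegrable_const) hptlim
  exact tendsto_nhds_unique hdct hFlim

lemma lip_intervalIntegrable {f : ℝ → ℝ} (hf : Measurable f) {C : ℝ}
    (hbd : ∀ x, |f x| ≤ C) (a b : ℝ) : IntervalIntegrable f volume a b := by
  rw [intervalIntegrable_iff]
  have hfin : volume (Set.uIoc a b) ≠ ⊤ := by rw [Set.uIoc]; exact measure_Ioc_lt_top.ne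
  exact Measure.integrableOn_of_bounded hfin hf.aestronglyMeasurable
    (Eventually.of_forall fun x => by rw [Real.norm_eq_abs]; exact hbd x)

theorem stmt9 (T M M' : ℝ) (hT : 0 < T) (K₁ K₂ : NNReal) (S p : ℝ → ℝ)
    (hS : LipschitzOnWith K₁ S (Set.Icc 0 T)) (hp : LipschitzOnWith K₂ p (Set.Icc 0 T))
    (h : ∀ᵐ t ∂(volume.restrict (Set.Ioo (0:ℝ) T)), deriv S t * (S t - p t) ≤ 0)
    (hM : ∀ t ∈ Set.Icc 0 T, |S t - p t| ≤ M)
    (hM' : (∫ τ in (0:ℝ)..T, |deriv p τ|) ≤ M') :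
    (∫ τ in (0:ℝ)..T, |deriv S τ * (S τ - p τ)|)
      ≤ (1/2) * (S 0 - p 0)^2 - (1/2) * (S T - p T)^2 + M * M' := by
  have h0T : (0:ℝ) ≤ T := hT.le
  obtain ⟨St, hSt, hSeq⟩ := hS.extend_real
  obtain ⟨pt, hpt, hpeq⟩ := hp.extend_real
  set u : ℝ → ℝ := fun t => St t - pt t with hu
  have hulip : LipschitzWith (K₁ + K₂) u := hSt.sub hpt
  have hM0 : 0 ≤ M := le_trans (abs_nonneg _) (hM 0 ⟨le_refl 0, h0T⟩)
  -- (S - p)^2 is Lipschitz on Icc 0 T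
  have hqlip : LipschitzOnWith (2 * M.toNNReal * (K₁ + K₂)) (fun t => (S t - p t)^2)
      (Set.Icc 0 T) := by
    apply LipschitzOnWith.of_dist_le_mul
    intro x hx y hy
    simp only [Real.dist_eq]
    have h1 := hM x hx
    have h2 := hM y hy
    have hSd : |S x - S y| ≤ (K₁:ℝ) * |x - y| := by
      simpa [Real.dist_eq] using hS.dist_le_mul x hx y hy
    have hpd : |p x - p y| ≤ (K₂:ℝ) * |x - y| := by
      simpa [Real.dist_eq] using hp.dist_le_mul x hx y hy
    have key : |(S x - p x)^2 - (S y - p y)^2| ≤ (2*M) * (((K₁:ℝ)+K₂) * |x-y|) := by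
      have he : (S x - p x)^2 - (S y - p y)^2
          = ((S x - p x) + (S y - p y)) * ((S x - S y) - (p x - p y)) := by ring
      rw [he, abs_mul]
      have hab : |(S x - p x) + (S y - p y)| ≤ 2*M :=
        (abs_add_le _ _).trans (by linarith)
      have hab2 : |(S x - S y) - (p x - p y)| ≤ ((K₁:ℝ)+K₂)*|x-y| :=
        (abs_sub _ _).trans (by linarith)
      exact mul_le_mul hab hab2 (abs_nonneg _) (by linarith)
    refine key.trans ?_
    have hMt : M ≤ (M.toNNReal : ℝ) := Real.le_coe_toNNReal M
    push_cast
    nlinarith [abs_nonneg (x-y), NNReal.coe_nonneg K₁, NNReal.coe_nonneg K₂,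
      mul_nonneg (NNReal.coe_nonneg K₁) (abs_nonneg (x-y)),
      mul_nonneg (NNReal.coe_nonneg K₂) (abs_nonneg (x-y))]
  obtain ⟨Q, hQ, hQeq⟩ := hqlip.extend_real
  -- derivatives of extensions agree on the interior
  have hmemIcc : ∀ t ∈ Set.Ioo (0:ℝ) T, Set.Icc (0:ℝ) T ∈ nhds t := fun t ht =>
    Icc_mem_nhds ht.1 ht.2
  have hdS : ∀ t ∈ Set.Ioo (0:ℝ) T, deriv S t = deriv St t := fun t ht =>
    Filter.EventuallyEq.deriv_eq (Filter.eventuallyEq_of_mem (hmemIcc t ht) hSeq)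
  have hdp : ∀ t ∈ Set.Ioo (0:ℝ) T, deriv p t = deriv pt t := fun t ht =>
    Filter.EventuallyEq.deriv_eq (Filter.eventuallyEq_of_mem (hmemIcc t ht) hpeq)
  have hQu : ∀ x ∈ Set.Icc (0:ℝ) T, Q x = u x ^ 2 := fun x hx => by
    rw [← hQeq hx, hu]
    simp only [hSeq hx, hpeq hx]
  have hdQ : ∀ t ∈ Set.Ioo (0:ℝ) T, deriv Q t = deriv (fun τ => u τ ^ 2) t := fun t ht =>
    Filter.EventuallyEq.deriv_eq
      (Filter.eventuallyEq_of_mem (hmemIcc t ht) (fun x hx => hQu x hx))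
  -- ae facts on the restricted measure
  have hIoo : volume.restrict (Set.Ioo (0:ℝ) T) = volume.restrict (Set.Ioc (0:ℝ) T) :=
    Measure.restrict_congr_set Ioo_ae_eq_Ioc
  rw [hIoo] at h
  have hmem : ∀ᵐ t ∂(volume.restrict (Set.Ioc (0:ℝ) T)), t ∈ Set.Ioo (0:ℝ) T := by
    rw [← hIoo]; exact ae_restrict_mem measurableSet_Ioo
  have key : ∀ᵐ t ∂(volume.restrict (Set.Ioc (0:ℝ) T)), deriv S t * (S t - p t)
      = (1/2) * deriv Q t + deriv pt t * u t := by
    filter_upwards [hmem, ae_restrict_of_ae hSt.ae_differentiableAt_real,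
      ae_restrict_of_ae hpt.ae_differentiableAt_real] with t ht hS' hp'
    have hIcc : t ∈ Set.Icc (0:ℝ) T := Set.Ioo_subset_Icc_self ht
    have hdu : HasDerivAt u (deriv St t - deriv pt t) t :=
      hS'.hasDerivAt.sub hp'.hasDerivAt
    have hdu2 : HasDerivAt (fun τ => u τ ^ 2) (2 * u t * (deriv St t - deriv pt t)) t := by
      have h2 := hdu.pow 2; simp at h2; exact h2
    rw [hdS t ht, hSeq hIcc, hpeq hIcc, hdQ t ht, hdu2.deriv, hu]
    simp only
    ring
  have habs : ∀ᵐ t ∂(volume.restrict (Set.Ioc (0:ℝ) T)),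
      |deriv S t * (S t - p t)| = -(deriv S t * (S t - p t)) :=
    h.mono fun t ht => abs_of_nonpos ht
  -- integrability
  have hQint : IntervalIntegrable (deriv Q) volume 0 T :=
    lip_intervalIntegrable (measurable_deriv Q) (lip_deriv_bound hQ) 0 T
  have hQint' : IntegrableOn (deriv Q) (Set.Ioc 0 T) volume := by
    rw [intervalIntegrable_iff, Set.uIoc_of_le h0T] at hQint; exact hQint
  have hf2meas : Measurable fun t => deriv pt t * u t :=
    (measurable_deriv pt).mul hulip.continuous.measurable
  have hubd : ∀ t ∈ Set.Icc (0:ℝ) T, |u t| ≤ M := fun t ht => by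
    rw [hu]; simp only [← hSeq ht, ← hpeq ht]; exact hM t ht
  have hf2int : IntegrableOn (fun t => deriv pt t * u t) (Set.Ioc 0 T) volume := by
    refine Measure.integrableOn_of_bounded (M := (K₂:ℝ) * M) measure_Ioc_lt_top.ne
      hf2meas.aestronglyMeasurable ?_
    refine (ae_restrict_mem measurableSet_Ioc).mono fun t ht => ?_
    rw [Real.norm_eq_abs, abs_mul]
    exact mul_le_mul (lip_deriv_bound hpt t) (hubd t ⟨le_of_lt ht.1, ht.2⟩)
      (abs_nonneg _) (NNReal.coe_nonneg _)
  have hf3int : IntegrableOn (fun t => |deriv pt t|) (Set.Ioc 0 T) volume := by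
    refine Measure.integrableOn_of_bounded (M := (K₂:ℝ)) measure_Ioc_lt_top.ne
      (measurable_deriv pt).abs.aestronglyMeasurable ?_
    exact Eventually.of_forall fun t => by
      rw [Real.norm_eq_abs, abs_abs]; exact lip_deriv_bound hpt t
  have hf1int : IntegrableOn (fun t => deriv S t * (S t - p t)) (Set.Ioc 0 T) volume :=
    Integrable.congr ((hQint'.const_mul (1/2)).add hf2int) (key.mono fun t ht => ht.symm)
  -- value of ∫ deriv Q
  have hQval : ∫ t in Set.Ioc (0:ℝ) T, deriv Q t = (S T - p T)^2 - (S 0 - p 0)^2 := by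
    rw [← intervalIntegral.integral_of_le h0T, lip_integral_deriv hQ,
      ← hQeq (Set.right_mem_Icc.2 h0T), ← hQeq (Set.left_mem_Icc.2 h0T)]
  -- ∫ |deriv pt| over the set equals the hypothesis integral
  have hdpcongr : ∫ t in Set.Ioc (0:ℝ) T, |deriv pt t| = ∫ τ in (0:ℝ)..T, |deriv p τ| := by
    rw [intervalIntegral.integral_of_le h0T]
    refine integral_congr_ae (hmem.mono fun t ht => ?_)
    show |deriv pt t| = |deriv p t|
    rw [hdp t ht]
  -- bound on the p̃' term
  have hf2bound : |∫ t in Set.Ioc (0:ℝ) T, deriv pt t * u t| ≤ M * M' := by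
    have hstep1 : |∫ t in Set.Ioc (0:ℝ) T, deriv pt t * u t|
        ≤ ∫ t in Set.Ioc (0:ℝ) T, |deriv pt t * u t| := by
      simpa only [Real.norm_eq_abs] using
        norm_integral_le_integral_norm (μ := volume.restrict (Set.Ioc (0:ℝ) T))
          (fun t => deriv pt t * u t)
    have hstep2 : ∫ t in Set.Ioc (0:ℝ) T, |deriv pt t * u t|
        ≤ ∫ t in Set.Ioc (0:ℝ) T, M * |deriv pt t| := by
      refine integral_mono_ae hf2int.abs (hf3int.const_mul M) ?_
      refine (ae_restrict_mem measurableSet_Ioc).mono fun t ht => ?_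
      show |deriv pt t * u t| ≤ M * |deriv pt t|
      rw [abs_mul]
      have := hubd t ⟨le_of_lt ht.1, ht.2⟩
      nlinarith [abs_nonneg (deriv pt t), abs_nonneg (u t)]
    have hstep3 : ∫ t in Set.Ioc (0:ℝ) T, M * |deriv pt t|
        = M * ∫ t in Set.Ioc (0:ℝ) T, |deriv pt t| := integral_const_mul M _
    have hstep4 : M * (∫ t in Set.Ioc (0:ℝ) T, |deriv pt t|) ≤ M * M' :=
      mul_le_mul_of_nonneg_left (by rw [hdpcongr]; exact hM') hM0
    linarith
  -- final computation
  have hmain : ∫ τ in (0:ℝ)..T, |deriv S τ * (S τ - p τ)|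
      = -(1/2 * ((S T - p T)^2 - (S 0 - p 0)^2)
          + ∫ t in Set.Ioc (0:ℝ) T, deriv pt t * u t) := by
    rw [intervalIntegral.integral_of_le h0T, integral_congr_ae habs, integral_neg,
      integral_congr_ae key,
      integral_add (hQint'.const_mul (1/2)) hf2int, integral_const_mul, hQval]
  rw [hmain]
  have := abs_le.1 hf2bound
  linarith
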